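/- If κ is a weakly inaccessible cardinal (an uncountable regular limit cardinal) and the diamond principle ◊_κ holds, then there exists a κ-active sequence λ̄ = ⟨λ_η, λ_η⁰, D_η : η ∈ T⟩, i.e. a κ-candidate satisfying the κ-active conditions. -/

import Mathlib

universe u

open Cardinal

/-- A sequence of ordinals `< κ` of length `< κ`, i.e. a member of `^{κ>}κ`.  The values
beyond the length are pinned to `0` so that the notion is extensional. -/
structure KSeq (κ : Cardinal.{u}) : Type (u + 1) where
  len : Ordinal.{u}
  len_lt : len < κ.ord
  val : Ordinal.{u} → Ordinal.{u}
  val_lt : ∀ β, β < len → val β < κ.ord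
  val_of_le : ∀ β, len ≤ β → val β = 0

namespace KSeq

variable {κ : Cardinal.{u}}

/-- The initial segment `η ↾ ε`. -/
noncomputable def restrict (η : KSeq κ) (ε : Ordinal.{u}) (h : ε ≤ η.len) : KSeq κ where
  len := ε
  len_lt := lt_of_le_of_lt h η.len_lt
  val β := if β < ε then η.val β else 0
  val_lt := by
    intro β hβ
    rw [if_pos hβ]
    exact η.val_lt β (lt_of_lt_of_le hβ h)
  val_of_le := by intro β hβ; rw [if_neg (not_lt.mpr hβ)]

/-- `η` is a proper initial segment of `ν` (`η ⊲ ν`). -/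
def slt (η ν : KSeq κ) : Prop :=
  η.len < ν.len ∧ ∀ β, β < η.len → η.val β = ν.val β

/-- `η` is an initial segment of `ν` (`η ⊴ ν`). -/
def sle (η ν : KSeq κ) : Prop :=
  η.len ≤ ν.len ∧ ∀ β, β < η.len → η.val β = ν.val β

end KSeq

/-- The restriction to `δ` of a full `κ`-branch `f : κ → κ`. -/
noncomputable def branchRestrict (κ : Cardinal.{u}) (f : Ordinal.{u} → Ordinal.{u})
    (hf : ∀ β, f β < κ.ord) (δ : Ordinal.{u}) (h : δ < κ.ord) : KSeq κ where
  len := δ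
  len_lt := h
  val β := if β < δ then f β else 0
  val_lt := by intro β hβ; rw [if_pos hβ]; exact hf β
  val_of_le := by intro β hβ; rw [if_neg (not_lt.mpr hβ)]

/-- `C` is a closed unbounded subset of `ρ`. -/
def IsClubIn (C : Set Ordinal.{u}) (ρ : Ordinal.{u}) : Prop :=
  (∀ γ ∈ C, γ < ρ) ∧
  (∀ β, β < ρ → ∃ γ ∈ C, β ≤ γ) ∧
  ∀ δ, δ < ρ → δ ≠ 0 → (∀ β, β < δ → ∃ γ ∈ C, β < γ ∧ γ < δ) → δ ∈ C

/-- `S` is stationary in `ρ`: it meets every closed unbounded subset of `ρ`. -/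
def IsStationaryIn (S : Set Ordinal.{u}) (ρ : Ordinal.{u}) : Prop :=
  ∀ C : Set Ordinal.{u}, IsClubIn C ρ → (S ∩ C).Nonempty

/-- The diamond principle `◊_κ`: there is a sequence `⟨A α ⊆ α : α < κ⟩` such that for
every `A ⊆ κ` the set `{α < κ : A ∩ α = A α}` is stationary in `κ`. -/
def DiamondKappa (κ : Cardinal.{u}) : Prop :=
  ∃ A : Ordinal.{u} → Set Ordinal.{u},
    (∀ α, A α ⊆ Set.Iio α) ∧
    ∀ S : Set Ordinal.{u}, S ⊆ Set.Iio κ.ord →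
      IsStationaryIn {α | α < κ.ord ∧ S ∩ Set.Iio α = A α} κ.ord

/-- `κ` is weakly inaccessible: an uncountable regular limit cardinal. -/
def IsWeaklyInaccessible (κ : Cardinal.{u}) : Prop :=
  ℵ₀ < κ ∧ κ.IsRegular ∧ ∀ μ : Cardinal.{u}, μ < κ → Order.succ μ < κ

/-- The tree `T` determined by the data `lam`, namely
`T = {η ∈ ^{κ>}κ : ∀ ε < lg η, η ε < λ_{η ↾ ε}}`. -/
def candTree (κ : Cardinal.{u}) (lam : KSeq κ → Cardinal.{u}) : Set (KSeq κ) :=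
  {η | ∀ (ε : Ordinal.{u}) (h : ε < η.len), η.val ε < (lam (η.restrict ε h.le)).ord}

/-- `D` is a `λ⁰`-complete filter on `λ`. -/
def IsCompleteFilterOn (lamv lam0 : Cardinal.{u}) (D : Set (Set Ordinal.{u})) : Prop :=
  (∀ X ∈ D, X ⊆ Set.Iio lamv.ord) ∧
  Set.Iio lamv.ord ∈ D ∧
  (∀ X ∈ D, ∀ Y : Set Ordinal.{u}, X ⊆ Y → Y ⊆ Set.Iio lamv.ord → Y ∈ D) ∧
  ∀ (ι : Type u), Nonempty ι → ∀ f : ι → Set Ordinal.{u}, #ι < lam0 →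
    (∀ i, f i ∈ D) → (⋂ i, f i) ∈ D

/-- `λ̄ = ⟨λ_η, λ⁰_η, D_η : η ∈ T⟩` is a `κ`-candidate. -/
def IsKappaCandidate (κ : Cardinal.{u}) (lam lam0 : KSeq κ → Cardinal.{u})
    (D : KSeq κ → Set (Set Ordinal.{u})) : Prop :=
  -- `T` contains the empty sequence and is closed under initial segments
  (∀ η : KSeq κ, η.len = 0 → η ∈ candTree κ lam) ∧
  (∀ η ∈ candTree κ lam, ∀ (ε : Ordinal.{u}) (h : ε ≤ η.len),
    η.restrict ε h ∈ candTree κ lam) ∧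
  -- `T` has no maximal node
  (∀ η ∈ candTree κ lam, ∃ ν ∈ candTree κ lam, KSeq.slt η ν) ∧
  -- `T` is closed under unions of `⊲`-increasing chains of length `< κ`
  (∀ γ : Ordinal.{u}, Order.IsSuccLimit γ → γ < κ.ord →
    ∀ c : Set.Iio γ → KSeq κ, (∀ i, c i ∈ candTree κ lam) →
      (∀ i j : Set.Iio γ, (i : Ordinal.{u}) < (j : Ordinal.{u}) → KSeq.slt (c i) (c j)) →
      ∀ η : KSeq κ, (∀ i, KSeq.sle (c i) η) →
        (∀ β, β < η.len → ∃ i, β < (c i).len) → η ∈ candTree κ lam) ∧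
  -- for each `η ∈ T`, either (A)_η or (B)_η holds
  ∀ η ∈ candTree κ lam,
    (lam η = 1 ∧ lam0 η = 1 ∧ D η = {{(0 : Ordinal.{u})}}) ∨
    ((lam0 η).IsRegular ∧ lam0 η ≤ lam η ∧ lam η < κ ∧
      IsCompleteFilterOn (lam η) (lam0 η) (D η))

/-- `λ̄` is `κ`-active. -/
def IsKappaActive (κ : Cardinal.{u}) (lam lam0 : KSeq κ → Cardinal.{u})
    (_D : KSeq κ → Set (Set Ordinal.{u})) : Prop :=
  -- condition (i): for every `κ`-branch through `T`, the set of levels `δ` where the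
  -- branch's restriction has `λ > 1` and is `λ`-minimal among the `λ ≠ 1` nodes of
  -- level `δ` is stationary
  (∀ (f : Ordinal.{u} → Ordinal.{u}) (hf : ∀ β, f β < κ.ord),
    (∀ (δ : Ordinal.{u}) (h : δ < κ.ord), branchRestrict κ f hf δ h ∈ candTree κ lam) →
    IsStationaryIn
      {δ | ∃ h : δ < κ.ord, 1 < lam (branchRestrict κ f hf δ h) ∧
        ∀ ν ∈ candTree κ lam, ν.len = δ → ν ≠ branchRestrict κ f hf δ h →
          (lam (branchRestrict κ f hf δ h) < lam ν ∨ lam ν = 1)} κ.ord) ∧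
  -- condition (ii)
  ∀ η ∈ candTree κ lam, ∀ ν ∈ candTree κ lam,
    η.len < ν.len → lam ν ≠ 1 → lam η < lam0 ν

namespace KappaActiveAux

open Cardinal

theorem kseq_ext {κ : Cardinal.{u}} {η ν : KSeq κ} (h1 : η.len = ν.len) (h2 : η.val = ν.val) :
    η = ν := by
  cases η; cases ν; cases h1; cases h2; rfl

theorem restrict_len {κ : Cardinal.{u}} (η : KSeq κ) (ε : Ordinal.{u}) (h : ε ≤ η.len) :
    (η.restrict ε h).len = ε := rfl

theorem restrict_restrict {κ : Cardinal.{u}} (η : KSeq κ) (ε : Ordinal.{u}) (h : ε ≤ η.len)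
    (ε' : Ordinal.{u}) (h' : ε' ≤ ε) :
    (η.restrict ε h).restrict ε' h' = η.restrict ε' (h'.trans h) := by
  refine kseq_ext rfl ?_
  funext β
  simp only [KSeq.restrict]
  by_cases hβ : β < ε'
  · rw [if_pos hβ, if_pos hβ, if_pos (lt_of_lt_of_le hβ h')]
  · rw [if_neg hβ, if_neg hβ]

theorem restrict_self {κ : Cardinal.{u}} (η : KSeq κ) :
    η.restrict η.len le_rfl = η := by
  refine kseq_ext rfl ?_
  funext β
  simp only [KSeq.restrict]
  by_cases hβ : β < η.len
  · rw [if_pos hβ]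
  · rw [if_neg hβ, η.val_of_le β (not_lt.mp hβ)]

/-- restrictions only depend on the values below `ε`. -/
theorem restrict_congr {κ : Cardinal.{u}} {η ν : KSeq κ} (ε : Ordinal.{u})
    (h : ε ≤ η.len) (h' : ε ≤ ν.len) (hval : ∀ β, β < ε → η.val β = ν.val β) :
    η.restrict ε h = ν.restrict ε h' := by
  refine kseq_ext rfl ?_
  funext β
  simp only [KSeq.restrict]
  by_cases hβ : β < ε
  · rw [if_pos hβ, if_pos hβ, hval β hβ]
  · rw [if_neg hβ, if_neg hβ]

theorem aleph_lt_of_wi {κ : Cardinal.{u}} (hκ : IsWeaklyInaccessible κ) :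
    ∀ δ : Ordinal.{u}, δ < κ.ord → Cardinal.aleph δ < κ := by
  intro δ
  induction δ using Ordinal.induction with
  | h δ IH =>
    intro hδ
    rcases Ordinal.zero_or_succ_or_isSuccLimit δ with h0 | ⟨a, rfl⟩ | hlim
    · subst h0
      rw [Cardinal.aleph_zero]
      exact hκ.1
    · rw [Cardinal.aleph_succ]
      exact hκ.2.2 _ (IH a (Order.lt_succ a) ((Order.lt_succ a).trans hδ))
    · rw [← Cardinal.ord_lt_ord, Cardinal.ord_aleph]
      have hb : Ordinal.omega δ = Ordinal.bsup δ (fun a _ => Ordinal.omega a) :=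
        (Ordinal.IsNormal.bsup_eq Ordinal.isNormal_omega hlim).symm
      rw [hb]
      refine Cardinal.bsup_lt_ord_of_isRegular hκ.2.1 (Cardinal.lt_ord.mp hδ) ?_
      intro i hi
      rw [← Cardinal.ord_aleph]
      exact Cardinal.ord_lt_ord.mpr (IH i hi (hi.trans hδ))

theorem club_inter_closure {κ : Cardinal.{u}} (hκ : IsWeaklyInaccessible κ)
    (C : Set Ordinal.{u}) (hC : IsClubIn C κ.ord)
    (g : Ordinal.{u} → Ordinal.{u}) (hg : ∀ β, β < κ.ord → g β < κ.ord) :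
    IsClubIn (C ∩ {δ | ∀ β, β < δ → g β < δ}) κ.ord := by
  have hreg : κ.IsRegular := hκ.2.1
  have hlim : Order.IsSuccLimit κ.ord := Cardinal.isSuccLimit_ord hreg.1
  have hs : ∀ x, x < κ.ord → Ordinal.bsup x (fun β _ => g β) < κ.ord := by
    intro x hx
    exact Cardinal.bsup_lt_ord_of_isRegular hreg (Cardinal.lt_ord.mp hx)
      (fun i hi => hg i (hi.trans hx))
  refine ⟨fun γ hγ => hC.1 γ hγ.1, ?_, ?_⟩
  · -- unboundedness
    intro β₀ hβ₀
    -- step function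
    have hnext : ∀ x : Ordinal.{u}, x < κ.ord →
        ∃ γ ∈ C, Order.succ (max (Ordinal.bsup x (fun β _ => g β)) x) ≤ γ := by
      intro x hx
      exact hC.2.1 _ (hlim.succ_lt (max_lt (hs x hx) hx))
    -- the recursive chain
    let b : ℕ → {x : Ordinal.{u} // x < κ.ord} := fun n =>
      Nat.rec ⟨β₀, hβ₀⟩
        (fun _ p => ⟨(hnext p.1 p.2).choose, hC.1 _ (hnext p.1 p.2).choose_spec.1⟩) n
    have hbC : ∀ n : ℕ, (b (n + 1)).1 ∈ C := fun n => (hnext (b n).1 (b n).2).choose_spec.1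
    have hble : ∀ n : ℕ,
        Order.succ (max (Ordinal.bsup (b n).1 (fun β _ => g β)) (b n).1) ≤ (b (n + 1)).1 :=
      fun n => (hnext (b n).1 (b n).2).choose_spec.2
    have hmono : ∀ n : ℕ, (b n).1 < (b (n + 1)).1 := by
      intro n
      exact lt_of_lt_of_le (lt_of_le_of_lt (le_max_right _ _) (Order.lt_succ _)) (hble n)
    have hdom : ∀ n : ℕ, ∀ β, β < (b n).1 → g β < (b (n + 1)).1 := by
      intro n β hβ
      refine lt_of_le_of_lt ?_ (lt_of_lt_of_le (Order.lt_succ _) (hble n))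
      exact le_trans (Ordinal.le_bsup _ β hβ) (le_max_left _ _)
    set δ : Ordinal.{u} := ⨆ n, (b n).1 with hδdef
    have hδ : δ < κ.ord := by
      refine Cardinal.iSup_lt_ord_lift_of_isRegular hreg ?_ (fun n => (b n).2)
      rw [Cardinal.mk_nat, Cardinal.lift_aleph0]
      exact hκ.1
    have hle : ∀ n, (b n).1 ≤ δ := fun n => Ordinal.le_iSup (fun n => (b n).1) n
    have hltiff : ∀ β, β < δ → ∃ n, β < (b n).1 := by
      intro β hβ
      exact Ordinal.lt_iSup_iff.mp hβ
    have hδne : δ ≠ 0 := by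
      have : (0 : Ordinal.{u}) < δ :=
        lt_of_le_of_lt zero_le (lt_of_lt_of_le (hmono 0) (hle 1))
      exact this.ne'
    have hδC : δ ∈ C := by
      refine hC.2.2 δ hδ hδne ?_
      intro β hβ
      obtain ⟨n, hn⟩ := hltiff β hβ
      exact ⟨(b (n + 1)).1, hbC n, lt_of_lt_of_le hn (le_of_lt (hmono n)),
        lt_of_lt_of_le (hmono (n + 1)) (hle (n + 2))⟩
    refine ⟨δ, ⟨hδC, ?_⟩, ?_⟩
    · intro β hβ
      obtain ⟨n, hn⟩ := hltiff β hβ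
      exact lt_of_lt_of_le (hdom n β hn) (hle (n + 1))
    · exact le_trans (le_of_eq rfl) (hle 0)
  · -- closedness
    intro δ hδ hne hlp
    constructor
    · refine hC.2.2 δ hδ hne ?_
      intro β hβ
      obtain ⟨γ, hγ, h1, h2⟩ := hlp β hβ
      exact ⟨γ, hγ.1, h1, h2⟩
    · intro β hβ
      obtain ⟨γ, hγ, h1, h2⟩ := hlp β hβ
      exact lt_trans (hγ.2 β h1) h2

theorem exists_pair {κ : Cardinal.{u}} (hκ : ℵ₀ ≤ κ) :
    ∃ p : Ordinal.{u} → Ordinal.{u} → Ordinal.{u},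
      (∀ β γ, β < κ.ord → γ < κ.ord → p β γ < κ.ord) ∧
      (∀ β γ, p β γ < κ.ord → β < κ.ord ∧ γ < κ.ord) ∧
      (∀ β γ β' γ', β < κ.ord → γ < κ.ord → β' < κ.ord → γ' < κ.ord →
        p β γ = p β' γ' → β = β' ∧ γ = γ') := by
  classical
  have hmk : #(Set.Iio κ.ord) = Cardinal.lift.{u + 1} κ := by
    rw [Ordinal.mk_Iio_ordinal, Cardinal.card_ord]
  have h2 : #((Set.Iio κ.ord) × (Set.Iio κ.ord)) ≤ #(Set.Iio κ.ord) := by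
    rw [Cardinal.mk_prod, Cardinal.lift_id, hmk, ← Cardinal.lift_mul,
      Cardinal.mul_eq_self hκ]
  obtain ⟨e⟩ := (Cardinal.le_def _ _).mp h2
  refine ⟨fun β γ => if h : β < κ.ord ∧ γ < κ.ord then (e ⟨⟨β, h.1⟩, ⟨γ, h.2⟩⟩ : Set.Iio κ.ord).1
    else κ.ord, ?_, ?_, ?_⟩
  · intro β γ hβ hγ
    dsimp only
    rw [dif_pos ⟨hβ, hγ⟩]
    exact (e _).2
  · intro β γ h
    by_contra hc
    dsimp only at h
    rw [dif_neg hc] at h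
    exact absurd h (lt_irrefl _)
  · intro β γ β' γ' hβ hγ hβ' hγ' h
    dsimp only at h
    rw [dif_pos ⟨hβ, hγ⟩, dif_pos ⟨hβ', hγ'⟩] at h
    have := e.injective (Subtype.ext h)
    obtain ⟨h1, h2⟩ := Prod.ext_iff.mp this
    exact ⟨Subtype.ext_iff.mp h1, Subtype.ext_iff.mp h2⟩

end KappaActiveAux


/-- If `κ` is weakly inaccessible and the diamond principle `◊_κ` holds,
then there exists a `κ`-active `λ̄ = ⟨λ_η, λ⁰_η, D_η : η ∈ T⟩`, i.e. a `κ`-candidate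
satisfying the `κ`-active conditions. -/
theorem exists_kappa_active (κ : Cardinal.{u}) (hκ : IsWeaklyInaccessible κ)
    (hdiamond : DiamondKappa κ) :
    ∃ (lam lam0 : KSeq κ → Cardinal.{u}) (D : KSeq κ → Set (Set Ordinal.{u})),
      IsKappaCandidate κ lam lam0 D ∧ IsKappaActive κ lam lam0 D := by
  classical
  obtain ⟨A, hA1, hA2⟩ := hdiamond
  obtain ⟨p, hp1, hp2, hp3⟩ := KappaActiveAux.exists_pair hκ.1.le
  have hlimord : Order.IsSuccLimit κ.ord := Cardinal.isSuccLimit_ord hκ.2.1.1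
  set dval : Ordinal.{u} → Ordinal.{u} → Ordinal.{u} :=
    fun δ β => if h : ∃ γ, p β γ ∈ A δ then h.choose else 0 with hdval
  set isWin : KSeq κ → Prop := fun η => ∀ β, β < η.len → η.val β = dval η.len β with hisWin
  set lam : KSeq κ → Cardinal.{u} :=
    fun η => if isWin η then Cardinal.aleph (Order.succ η.len) else 1 with hlam
  set D : KSeq κ → Set (Set Ordinal.{u}) :=
    fun η => if isWin η then
        {X | X ⊆ Set.Iio (Cardinal.aleph (Order.succ η.len)).ord ∧ (0 : Ordinal.{u}) ∈ X}
      else {{(0 : Ordinal.{u})}} with hD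
  have hbig1 : ∀ δ : Ordinal.{u}, (1 : Cardinal) < Cardinal.aleph (Order.succ δ) :=
    fun δ => lt_of_lt_of_le Cardinal.one_lt_aleph0 (Cardinal.aleph0_le_aleph _)
  have hlamwin : ∀ η : KSeq κ, isWin η → lam η = Cardinal.aleph (Order.succ η.len) := by
    intro η hw
    simp only [hlam]
    rw [if_pos hw]
  have hlamnotwin : ∀ η : KSeq κ, ¬ isWin η → lam η = 1 := by
    intro η hw
    simp only [hlam]
    rw [if_neg hw]
  have hlampos : ∀ η : KSeq κ, (0 : Ordinal) < (lam η).ord := by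
    intro η
    have h1 : (0 : Cardinal) < lam η := by
      by_cases hw : isWin η
      · rw [hlamwin η hw]; exact lt_trans zero_lt_one (hbig1 _)
      · rw [hlamnotwin η hw]; exact zero_lt_one
    rw [Cardinal.lt_ord, Ordinal.card_zero]
    exact h1
  have hmemT : ∀ ζ : KSeq κ, ζ ∈ candTree κ lam ↔
      ∀ (ε : Ordinal.{u}) (h : ε < ζ.len), ζ.val ε < (lam (ζ.restrict ε h.le)).ord :=
    fun ζ => Iff.rfl
  refine ⟨lam, lam, D, ⟨?_, ?_, ?_, ?_, ?_⟩, ?_, ?_⟩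
  · -- contains empty / length-0 sequences
    intro η h0
    rw [hmemT]
    intro ε hε
    rw [h0] at hε
    exact absurd hε (not_lt_of_ge zero_le)
  · -- closed under restrictions
    intro η hη ε h
    rw [hmemT] at hη ⊢
    intro ε' hε'
    have hε'' : ε' < ε := hε'
    rw [KappaActiveAux.restrict_restrict η ε h ε' (le_of_lt hε'')]
    have hv : (η.restrict ε h).val ε' = η.val ε' := if_pos hε''
    rw [hv]
    exact hη ε' (lt_of_lt_of_le hε'' h)
  · -- no maximal node
    intro η hη
    rw [hmemT] at hη
    have hsucclt : Order.succ η.len < κ.ord := hlimord.succ_lt η.len_lt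
    refine ⟨⟨Order.succ η.len, hsucclt, η.val, ?_, ?_⟩, ?_, ?_, ?_⟩
    · intro β hβ
      rcases lt_or_eq_of_le (Order.lt_succ_iff.mp hβ) with hlt | heq
      · exact η.val_lt β hlt
      · rw [η.val_of_le β heq.ge]
        exact hlimord.pos
    · intro β hβ
      exact η.val_of_le β (le_trans (Order.le_succ _) hβ)
    · rw [hmemT]
      intro ε hε
      have hεle : ε ≤ η.len := Order.lt_succ_iff.mp hε
      have hres : KSeq.restrict ⟨Order.succ η.len, hsucclt, η.val, _, _⟩ ε hε.le
          = η.restrict ε hεle :=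
        KappaActiveAux.restrict_congr ε hε.le hεle (fun β _ => rfl)
      rw [hres]
      show η.val ε < _
      rcases lt_or_eq_of_le hεle with hlt | heq
      · exact hη ε hlt
      · subst heq
        rw [KappaActiveAux.restrict_self, η.val_of_le _ le_rfl]
        exact hlampos η
    · exact Order.lt_succ _
    · intro β _
      rfl
  · -- closed under unions of chains
    intro γ _ _ c hc _ η hsle hcov
    rw [hmemT]
    intro ε hε
    obtain ⟨i, hi⟩ := hcov ε hε
    have h1 := (hmemT _).mp (hc i) ε hi
    have hres : (c i).restrict ε hi.le = η.restrict ε hε.le :=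
      KappaActiveAux.restrict_congr ε hi.le hε.le (fun β hβ => (hsle i).2 β (hβ.trans hi))
    rw [hres, (hsle i).2 ε hi] at h1
    exact h1
  · -- (A) or (B)
    intro η _
    by_cases hw : isWin η
    · refine Or.inr ?_
      have hDw : D η = {X | X ⊆ Set.Iio (Cardinal.aleph (Order.succ η.len)).ord ∧
          (0 : Ordinal.{u}) ∈ X} := by
        simp only [hD]
        rw [if_pos hw]
      have h0mem : (0 : Ordinal.{u}) ∈ Set.Iio (Cardinal.aleph (Order.succ η.len)).ord := by
        have := hlampos η
        rw [hlamwin η hw] at this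
        exact this
      rw [hlamwin η hw, hDw]
      refine ⟨?_, le_rfl, KappaActiveAux.aleph_lt_of_wi hκ _ (hlimord.succ_lt η.len_lt), ?_, ?_, ?_, ?_⟩
      · rw [Cardinal.aleph_succ]
        exact Cardinal.isRegular_succ (Cardinal.aleph0_le_aleph _)
      · exact fun X hX => hX.1
      · exact ⟨subset_rfl, h0mem⟩
      · exact fun X hX Y hXY hY => ⟨hY, hXY hX.2⟩
      · intro ι hne f _ hf
        have i0 : ι := hne.some
        exact ⟨fun x hx => (hf i0).1 (Set.mem_iInter.mp hx i0),
          Set.mem_iInter.mpr fun i => (hf i).2⟩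
    · refine Or.inl ⟨hlamnotwin η hw, hlamnotwin η hw, ?_⟩
      simp only [hD]
      rw [if_neg hw]
  · -- κ-active condition (i)
    intro f hf _
    intro C hC
    have hgκ : ∀ β, β < κ.ord → p β (f β) < κ.ord := fun β hβ => hp1 _ _ hβ (hf β)
    set S : Set Ordinal.{u} := {ξ | ∃ β, β < κ.ord ∧ p β (f β) = ξ} with hS
    have hSsub : S ⊆ Set.Iio κ.ord := by
      rintro ξ ⟨β, hβ, rfl⟩
      exact hp1 _ _ hβ (hf β)
    obtain ⟨δ, ⟨hδord, hguess⟩, hδC, hδcl⟩ :=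
      hA2 S hSsub _ (KappaActiveAux.club_inter_closure hκ C hC _ hgκ)
    have hkey : ∀ β, β < δ → dval δ β = f β := by
      intro β hβ
      have hmemS : p β (f β) ∈ S ∩ Set.Iio δ := ⟨⟨β, hβ.trans hδord, rfl⟩, hδcl β hβ⟩
      have hin : p β (f β) ∈ A δ := by rw [← hguess]; exact hmemS
      have hex : ∃ γ, p β γ ∈ A δ := ⟨f β, hin⟩
      have hch : p β hex.choose ∈ A δ := hex.choose_spec
      have hch2 : p β hex.choose ∈ S ∩ Set.Iio δ := by rw [hguess]; exact hch
      obtain ⟨⟨β', hβ', heq⟩, hlt⟩ := hch2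
      have hsm := hp2 β hex.choose (hlt.trans hδord)
      obtain ⟨hbb, hgg⟩ := hp3 β' (f β') β hex.choose hβ' (hf β') hsm.1 hsm.2 heq
      have hdv : dval δ β = hex.choose := by
        simp only [hdval]
        rw [dif_pos hex]
      rw [hdv, ← hgg, hbb]
    have hwin : isWin (branchRestrict κ f hf δ hδord) := by
      rw [hisWin]
      intro β hβ
      have hβδ : β < δ := hβ
      show (if β < δ then f β else 0) = dval δ β
      rw [if_pos hβδ, hkey β hβδ]
    refine ⟨δ, ⟨hδord, ?_, ?_⟩, hδC⟩
    · rw [hlamwin _ hwin]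
      exact hbig1 _
    · intro ν hν hlen hne
      by_cases hwv : isWin ν
      · exfalso
        apply hne
        refine KappaActiveAux.kseq_ext hlen ?_
        funext β
        by_cases hβ : β < δ
        · have h1 : ν.val β = dval ν.len β := hwv β (by rw [hlen]; exact hβ)
          rw [hlen] at h1
          show ν.val β = (if β < δ then f β else 0)
          rw [if_pos hβ, h1, hkey β hβ]
        · have h0 : ν.val β = 0 := ν.val_of_le β (by rw [hlen]; exact not_lt.mp hβ)
          show ν.val β = (if β < δ then f β else 0)
          rw [if_neg hβ, h0]
      · exact Or.inr (hlamnotwin ν hwv)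
  · -- κ-active condition (ii)
    intro η hη ν hν hlen hne1
    have hwv : isWin ν := by
      by_contra h
      exact hne1 (hlamnotwin ν h)
    rw [hlamwin ν hwv]
    by_cases hwη : isWin η
    · rw [hlamwin η hwη]
      exact Cardinal.aleph_lt_aleph.mpr (Order.succ_lt_succ hlen)
    · rw [hlamnotwin η hwη]
      exact hbig1 _
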